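/- If a locally integrable function g : (0,∞) → ℂ satisfies g(u₁)g(u₂) = K(u₁+u₂) for almost all u₁,u₂ > 0 and some function K, and g is not a.e. zero, then there exist complex constants A, B such that g(u) = A·exp(−B·u) for almost every u > 0. -/

import Mathlib

open MeasureTheory Set Filter
open scoped Topology

namespace CFEAux

lemma shift_null {N : Set ℝ} (hN : MeasurableSet N) (h0 : volume N = 0) (a : ℝ) :
    volume {x : ℝ | a + x ∈ N} = 0 := by
  have := (measurePreserving_add_left (volume : Measure ℝ) a).measure_preimage
    hN.nullMeasurableSet
  simpa [Set.preimage, h0] using this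

lemma shift_null' {N : Set ℝ} (hN : MeasurableSet N) (h0 : volume N = 0) (a : ℝ) :
    volume {x : ℝ | x + a ∈ N} = 0 := by
  have := (measurePreserving_add_right (volume : Measure ℝ) a).measure_preimage
    hN.nullMeasurableSet
  simpa [Set.preimage, h0] using this

lemma add_null2 {N : Set ℝ} (hN : MeasurableSet N) (h0 : volume N = 0) :
    volume {p : ℝ × ℝ | p.1 + p.2 ∈ N} = 0 := by
  have hm : MeasurableSet {p : ℝ × ℝ | p.1 + p.2 ∈ N} :=
    (measurable_fst.add measurable_snd) hN
  rw [Measure.volume_eq_prod, Measure.measure_prod_null hm]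
  refine Filter.Eventually.of_forall fun a => ?_
  show volume (Prod.mk a ⁻¹' {p : ℝ × ℝ | p.1 + p.2 ∈ N}) = 0
  exact shift_null hN h0 a

lemma swap_null {N : Set (ℝ × ℝ)} (hN : MeasurableSet N) (h0 : volume N = 0) :
    volume (Prod.swap ⁻¹' N) = 0 := by
  rw [Measure.volume_eq_prod] at h0 ⊢
  rw [Measure.measurePreserving_swap.measure_preimage hN.nullMeasurableSet]
  exact h0

lemma slice_null {N : Set (ℝ × ℝ)} (hN : MeasurableSet N) (h0 : volume N = 0) :
    volume {s : ℝ | volume (Prod.mk s ⁻¹' N) ≠ 0} = 0 := by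
  rw [Measure.volume_eq_prod, Measure.measure_prod_null hN] at h0
  simpa [Filter.EventuallyEq, ae_iff] using h0

lemma sliceSet_meas {N : Set (ℝ × ℝ)} (hN : MeasurableSet N) :
    MeasurableSet {s : ℝ | volume (Prod.mk s ⁻¹' N) ≠ 0} := by
  have hSm : Measurable fun s : ℝ => volume (Prod.mk s ⁻¹' N) :=
    measurable_measure_prodMk_left hN
  exact hSm (measurableSet_singleton 0).compl

lemma prod3_null {s : Set ((ℝ × ℝ) × ℝ)} (hs : MeasurableSet s)
    (h : ∀ᵐ p : ℝ × ℝ, volume (Prod.mk p ⁻¹' s) = 0) : volume s = 0 := by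
  rw [Measure.volume_eq_prod, Measure.measure_prod_null hs]
  exact h

variable {N : Set (ℝ × ℝ)} {N₀ : Set ℝ}

lemma A1 (hN : MeasurableSet N) (h0 : volume N = 0) :
    volume {x : (ℝ × ℝ) × ℝ | (x.1.1 + x.1.2, x.2) ∈ N} = 0 := by
  have hmap : Measurable fun x : (ℝ × ℝ) × ℝ => ((x.1.1 + x.1.2, x.2) : ℝ × ℝ) :=
    (measurable_fst.fst.add measurable_fst.snd).prodMk measurable_snd
  refine prod3_null (hmap hN) ?_
  have hae : ∀ᵐ p : ℝ × ℝ, p.1 + p.2 ∉ {s : ℝ | volume (Prod.mk s ⁻¹' N) ≠ 0} := by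
    rw [ae_iff]
    refine measure_mono_null (fun p hp => ?_) (add_null2 (sliceSet_meas hN) (slice_null hN h0))
    simpa using hp
  filter_upwards [hae] with p hp
  have : Prod.mk p ⁻¹' {x : (ℝ × ℝ) × ℝ | (x.1.1 + x.1.2, x.2) ∈ N}
      = Prod.mk (p.1 + p.2) ⁻¹' N := rfl
  rw [this]
  simpa using hp

lemma A2 (hN : MeasurableSet N) (h0 : volume N = 0) :
    volume {x : (ℝ × ℝ) × ℝ | (x.1.1, x.1.2 + x.2) ∈ N} = 0 := by
  have hmap : Measurable fun x : (ℝ × ℝ) × ℝ => ((x.1.1, x.1.2 + x.2) : ℝ × ℝ) :=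
    measurable_fst.fst.prodMk (measurable_fst.snd.add measurable_snd)
  refine prod3_null (hmap hN) ?_
  have hae : ∀ᵐ p : ℝ × ℝ, p.1 ∉ {s : ℝ | volume (Prod.mk s ⁻¹' N) ≠ 0} := by
    rw [ae_iff]
    have hnull : volume ({s : ℝ | volume (Prod.mk s ⁻¹' N) ≠ 0} ×ˢ (univ : Set ℝ)) = 0 := by
      rw [Measure.volume_eq_prod, Measure.prod_prod, slice_null hN h0, zero_mul]
    refine measure_mono_null (fun p hp => ?_) hnull
    simp only [mem_prod, mem_univ, and_true]
    simpa using hp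
  filter_upwards [hae] with p hp
  have h1 : Prod.mk p ⁻¹' {x : (ℝ × ℝ) × ℝ | (x.1.1, x.1.2 + x.2) ∈ N}
      = {w : ℝ | p.2 + w ∈ Prod.mk p.1 ⁻¹' N} := rfl
  rw [h1]
  have hsm : MeasurableSet (Prod.mk p.1 ⁻¹' N) := measurable_prodMk_left hN
  have hs0 : volume (Prod.mk p.1 ⁻¹' N) = 0 := by simpa using hp
  exact shift_null hsm hs0 p.2

lemma A3 (hN : MeasurableSet N) (h0 : volume N = 0) :
    volume {x : (ℝ × ℝ) × ℝ | (x.2 + x.1.1, x.1.2) ∈ N} = 0 := by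
  have hN' : MeasurableSet (Prod.swap ⁻¹' N) := measurable_swap hN
  have hN'0 : volume (Prod.swap ⁻¹' N) = 0 := swap_null hN h0
  have hmap : Measurable fun x : (ℝ × ℝ) × ℝ => ((x.2 + x.1.1, x.1.2) : ℝ × ℝ) :=
    (measurable_snd.add measurable_fst.fst).prodMk measurable_fst.snd
  refine prod3_null (hmap hN) ?_
  have hae : ∀ᵐ p : ℝ × ℝ, p.2 ∉ {s : ℝ | volume (Prod.mk s ⁻¹' (Prod.swap ⁻¹' N)) ≠ 0} := by
    rw [ae_iff]
    have hnull : volume ((univ : Set ℝ) ×ˢ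
        {s : ℝ | volume (Prod.mk s ⁻¹' (Prod.swap ⁻¹' N)) ≠ 0}) = 0 := by
      rw [Measure.volume_eq_prod, Measure.prod_prod, slice_null hN' hN'0, mul_zero]
    refine measure_mono_null (fun p hp => ?_) hnull
    simp only [mem_prod, mem_univ, true_and]
    simpa using hp
  filter_upwards [hae] with p hp
  have h1 : Prod.mk p ⁻¹' {x : (ℝ × ℝ) × ℝ | (x.2 + x.1.1, x.1.2) ∈ N}
      = {u : ℝ | u + p.1 ∈ Prod.mk p.2 ⁻¹' (Prod.swap ⁻¹' N)} := by
    ext u; simp [Set.preimage, Prod.swap]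
  rw [h1]
  have hsm : MeasurableSet (Prod.mk p.2 ⁻¹' (Prod.swap ⁻¹' N)) := measurable_prodMk_left hN'
  have hs0 : volume (Prod.mk p.2 ⁻¹' (Prod.swap ⁻¹' N)) = 0 := by simpa using hp
  exact shift_null' hsm hs0 p.1

lemma A4 (hN : MeasurableSet N) (h0 : volume N = 0) :
    volume {x : (ℝ × ℝ) × ℝ | (x.2, x.1.1 + x.1.2) ∈ N} = 0 := by
  have hN' : MeasurableSet (Prod.swap ⁻¹' N) := measurable_swap hN
  have hN'0 : volume (Prod.swap ⁻¹' N) = 0 := swap_null hN h0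
  have hmap : Measurable fun x : (ℝ × ℝ) × ℝ => ((x.2, x.1.1 + x.1.2) : ℝ × ℝ) :=
    measurable_snd.prodMk (measurable_fst.fst.add measurable_fst.snd)
  refine prod3_null (hmap hN) ?_
  have hae : ∀ᵐ p : ℝ × ℝ,
      p.1 + p.2 ∉ {s : ℝ | volume (Prod.mk s ⁻¹' (Prod.swap ⁻¹' N)) ≠ 0} := by
    rw [ae_iff]
    refine measure_mono_null (fun p hp => ?_)
      (add_null2 (sliceSet_meas hN') (slice_null hN' hN'0))
    simpa using hp
  filter_upwards [hae] with p hp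
  have h1 : Prod.mk p ⁻¹' {x : (ℝ × ℝ) × ℝ | (x.2, x.1.1 + x.1.2) ∈ N}
      = Prod.mk (p.1 + p.2) ⁻¹' (Prod.swap ⁻¹' N) := by
    ext u; simp [Set.preimage, Prod.swap]
  rw [h1]
  simpa using hp

lemma C1 (hN : MeasurableSet N₀) (h0 : volume N₀ = 0) :
    volume {x : (ℝ × ℝ) × ℝ | x.1.1 + x.1.2 ∈ N₀} = 0 := by
  have : {x : (ℝ × ℝ) × ℝ | x.1.1 + x.1.2 ∈ N₀}
      = {p : ℝ × ℝ | p.1 + p.2 ∈ N₀} ×ˢ (univ : Set ℝ) := by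
    ext x; simp
  rw [this, Measure.volume_eq_prod, Measure.prod_prod, add_null2 hN h0, zero_mul]

lemma C2 (h0 : volume N₀ = 0) :
    volume {x : (ℝ × ℝ) × ℝ | x.2 ∈ N₀} = 0 := by
  have : {x : (ℝ × ℝ) × ℝ | x.2 ∈ N₀} = (univ : Set (ℝ × ℝ)) ×ˢ N₀ := by ext x; simp
  rw [this, Measure.volume_eq_prod, Measure.prod_prod, h0, mul_zero]

lemma C3 (h0 : volume N₀ = 0) :
    volume {x : (ℝ × ℝ) × ℝ | x.1.1 ∈ N₀} = 0 := by
  have h2 : volume {p : ℝ × ℝ | p.1 ∈ N₀} = 0 := by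
    have : {p : ℝ × ℝ | p.1 ∈ N₀} = N₀ ×ˢ (univ : Set ℝ) := by ext p; simp
    rw [this, Measure.volume_eq_prod, Measure.prod_prod, h0, zero_mul]
  have : {x : (ℝ × ℝ) × ℝ | x.1.1 ∈ N₀} = ({p : ℝ × ℝ | p.1 ∈ N₀}) ×ˢ (univ : Set ℝ) := by
    ext x; simp
  rw [this, Measure.volume_eq_prod, Measure.prod_prod, h2, zero_mul]

lemma C4 (hN : MeasurableSet N₀) (h0 : volume N₀ = 0) :
    volume {x : (ℝ × ℝ) × ℝ | x.1.2 + x.2 ∈ N₀} = 0 := by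
  have hmap : Measurable fun x : (ℝ × ℝ) × ℝ => x.1.2 + x.2 :=
    measurable_fst.snd.add measurable_snd
  refine prod3_null (hmap hN) ?_
  refine Filter.Eventually.of_forall fun p => ?_
  show volume {w : ℝ | p.2 + w ∈ N₀} = 0
  exact shift_null hN h0 p.2

lemma bad_superset {α : Type*} [MeasurableSpace α] {μ : Measure α} {P : α → Prop}
    (h : ∀ᵐ x ∂μ, P x) :
    ∃ N : Set α, MeasurableSet N ∧ μ N = 0 ∧ ∀ x, x ∉ N → P x := by
  obtain ⟨N, hsub, hm, h0⟩ := exists_measurable_superset_of_null (ae_iff.mp h)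
  exact ⟨N, hm, h0, fun x hx => by by_contra hP; exact hx (hsub hP)⟩

lemma ae_swap {Q : ℝ × ℝ → Prop} (h : ∀ᵐ p : ℝ × ℝ, Q p) :
    ∀ᵐ p : ℝ × ℝ, Q (p.2, p.1) := by
  obtain ⟨N, hm, h0, hP⟩ := bad_superset h
  rw [ae_iff]
  refine measure_mono_null (fun p hp => ?_) (swap_null hm h0)
  simp only [mem_setOf_eq] at hp
  by_contra hmem
  exact hp (hP _ hmem)

lemma piece (g : ℝ → ℂ) (hloc : LocallyIntegrableOn g (Set.Ioi 0))
    (hcon : ∀ a b : ℝ, 0 < a → a < b → (∫ w in a..b, g w) = 0)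
    {ε M : ℝ} (hε : 0 < ε) :
    volume ({x : ℝ | g x ≠ 0} ∩ Ioc ε M) = 0 := by
  set g₁ : ℝ → ℂ := (Ioc ε M).indicator g with hg₁
  have hIcc : Set.Icc ε M ⊆ Set.Ioi 0 := fun x hx => lt_of_lt_of_le hε hx.1
  have hInt : Integrable g₁ volume :=
    ((hloc.integrableOn_compact_subset hIcc isCompact_Icc).mono_set
      Ioc_subset_Icc_self).integrable_indicator measurableSet_Ioc
  have hint0 : ∀ c d : ℝ, (∫ t in c..d, g₁ t) = 0 := by
    have base : ∀ c d : ℝ, c ≤ d → (∫ t in c..d, g₁ t) = 0 := by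
      intro c d hcd
      rw [intervalIntegral.integral_of_le hcd, hg₁,
        setIntegral_indicator measurableSet_Ioc, Ioc_inter_Ioc]
      by_cases h : c ⊔ ε < d ⊓ M
      · rw [← intervalIntegral.integral_of_le h.le]
        exact hcon _ _ (lt_of_lt_of_le hε (le_max_right c ε)) h
      · rw [Ioc_eq_empty h]
        simp
    intro c d
    rcases le_total c d with h | h
    · exact base c d h
    · rw [intervalIntegral.integral_symm, base d c h, neg_zero]
  have hdiff : ∀ᵐ x : ℝ, g₁ x = 0 := by
    filter_upwards [IsUnifLocDoublingMeasure.ae_tendsto_average (μ := volume)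
      hInt.locallyIntegrable 1] with x hx
    have h1 : Tendsto (fun r : ℝ => ⨍ y in Metric.closedBall x r, g₁ y) (𝓝[>] 0)
        (𝓝 (g₁ x)) := by
      refine hx (fun _ => x) id tendsto_id ?_
      filter_upwards [self_mem_nhdsWithin] with r hr
      have hr' : (0:ℝ) < r := hr
      simp [Metric.mem_closedBall, dist_self]
      linarith
    have h2 : Tendsto (fun r : ℝ => ⨍ y in Metric.closedBall x r, g₁ y) (𝓝[>] 0)
        (𝓝 0) := by
      have ev : ∀ᶠ r in 𝓝[>] (0:ℝ),
          (⨍ y in Metric.closedBall x r, g₁ y) = 0 := by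
        filter_upwards [self_mem_nhdsWithin] with r hr
        have hr' : (0:ℝ) < r := hr
        have hball : Metric.closedBall x r = Icc (x - r) (x + r) := Real.closedBall_eq_Icc
        have hint : (∫ y in Metric.closedBall x r, g₁ y) = 0 := by
          rw [hball, integral_Icc_eq_integral_Ioc,
            ← intervalIntegral.integral_of_le (by linarith : x - r ≤ x + r)]
          exact hint0 _ _
        rw [setAverage_eq, hint, smul_zero]
      exact Tendsto.congr' (ev.mono fun r hr => hr.symm) tendsto_const_nhds
    exact (tendsto_nhds_unique h1 h2)
  refine measure_mono_null (fun x hx => ?_) (ae_iff.mp hdiff)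
  rcases hx with ⟨hgx, hxm⟩
  show ¬ g₁ x = 0
  rw [hg₁, indicator_of_mem hxm]
  exact hgx

lemma exists_interval (g : ℝ → ℂ) (hloc : LocallyIntegrableOn g (Set.Ioi 0))
    (hne : ¬ (g =ᵐ[volume.restrict (Set.Ioi 0)] 0)) :
    ∃ a b : ℝ, 0 < a ∧ a < b ∧ (∫ w in a..b, g w) ≠ 0 := by
  by_contra hcon
  push_neg at hcon
  apply hne
  have hpieces : ∀ n : ℕ,
      volume ({x : ℝ | g x ≠ 0} ∩ Ioc (1/(n+1) : ℝ) (n+1 : ℝ)) = 0 := fun n =>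
    piece g hloc (fun a b ha hab => hcon a b ha hab) (by positivity)
  have hnull : (volume.restrict (Set.Ioi 0)) {x : ℝ | g x ≠ 0} = 0 := by
    rw [Measure.restrict_apply' measurableSet_Ioi]
    refine measure_mono_null (fun x hx => ?_) (measure_iUnion_null (fun n : ℕ => hpieces n))
    rcases hx with ⟨hgx, hx0⟩
    have hx0' : (0:ℝ) < x := hx0
    obtain ⟨n, hn⟩ := exists_nat_one_div_lt hx0'
    obtain ⟨m, hm⟩ := exists_nat_ge x
    refine mem_iUnion.mpr ⟨n + m, hgx, ?_, ?_⟩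
    · have h1 : (1:ℝ)/((n:ℝ) + (m:ℝ) + 1) ≤ 1/((n:ℝ)+1) := by
        apply one_div_le_one_div_of_le
        · positivity
        · linarith [Nat.cast_nonneg (α := ℝ) m]
      push_cast
      linarith
    · push_cast
      linarith [Nat.cast_nonneg (α := ℝ) n, hm]
  rw [Filter.EventuallyEq, ae_iff]
  simpa using hnull

lemma aezero_of_pairs {g : ℝ → ℂ}
    (h : ∀ᵐ p : ℝ × ℝ, 0 < p.1 → 0 < p.2 → g (p.1 + p.2) = 0) :
    g =ᵐ[volume.restrict (Set.Ioi 0)] 0 := by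
  rw [Measure.volume_eq_prod] at h
  have h2 := Measure.ae_ae_of_ae_prod h
  have key : ∀ n : ℕ, ∃ v : ℝ, 0 < v ∧ v < 1/(n+1) ∧
      (∀ᵐ w : ℝ, 0 < w → g (v + w) = 0) := by
    intro n
    by_contra hno
    push_neg at hno
    have hsub : Ioo (0:ℝ) (1/(n+1)) ⊆
        {v : ℝ | ¬ (∀ᵐ w : ℝ, 0 < v → 0 < w → g (v + w) = 0)} := by
      intro v hv
      simp only [mem_setOf_eq]
      intro hae
      refine hno v hv.1 hv.2 ?_
      filter_upwards [hae] with w hw h0w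
      exact h0w.2 (hw hv.1 h0w.1)
    have hvol : volume (Ioo (0:ℝ) (1/(n+1))) = 0 :=
      measure_mono_null hsub (ae_iff.mp h2)
    rw [Real.volume_Ioo] at hvol
    have : (0:ℝ) < 1/(n+1) := by positivity
    simp [ENNReal.ofReal_eq_zero] at hvol
    linarith
  choose v hv0 hvlt hvae using key
  have hn : ∀ n : ℕ, volume {x : ℝ | ¬ (x ∈ Ioi (1/(n+1):ℝ) → g x = 0)} = 0 := by
    intro n
    obtain ⟨N, hNm, hN0, hNP⟩ := bad_superset (hvae n)
    have hshift : volume {x : ℝ | x + (- v n) ∈ N} = 0 := shift_null' hNm hN0 _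
    refine measure_mono_null (fun x hx => ?_) hshift
    simp only [mem_setOf_eq] at hx ⊢
    by_contra hmem
    apply hx
    intro hxmem
    have hx1 : (1:ℝ)/(n+1) < x := hxmem
    have hw : 0 < x - v n := by linarith [hvlt n]
    have := hNP (x - v n) (by simpa [sub_eq_add_neg] using hmem) hw
    simpa using this
  rw [Filter.EventuallyEq, ae_iff, Measure.restrict_apply' measurableSet_Ioi]
  refine measure_mono_null (fun x hx => ?_) (measure_iUnion_null hn)
  rcases hx with ⟨hgx, hx0⟩
  simp only [mem_setOf_eq, Pi.zero_apply] at hgx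
  obtain ⟨n, hn'⟩ := exists_nat_one_div_lt (mem_Ioi.mp hx0)
  exact mem_iUnion.mpr ⟨n, fun himp => hgx (himp hn')⟩

end CFEAux
set_option maxHeartbeats 4000000 in
theorem cauchy_functional_equation_two_fold
    (g K : ℝ → ℂ)
    (hloc : LocallyIntegrableOn g (Set.Ioi 0))
    (hfe : ∀ᵐ p : ℝ × ℝ ∂(volume.restrict ((Set.Ioi 0) ×ˢ (Set.Ioi 0))),
      g p.1 * g p.2 = K (p.1 + p.2))
    (hne : ¬ (g =ᵐ[volume.restrict (Set.Ioi 0)] 0)) :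
    ∃ A B : ℂ, ∀ᵐ u ∂(volume.restrict (Set.Ioi (0:ℝ))),
      g u = A * Complex.exp (-B * u) := by
  classical
  -- Step 0: pointwise-off-null-set form of the functional equation
  have hfeP : ∀ᵐ p : ℝ × ℝ, 0 < p.1 → 0 < p.2 → g p.1 * g p.2 = K (p.1 + p.2) := by
    have := (ae_restrict_iff' (measurableSet_Ioi.prod measurableSet_Ioi)).mp hfe
    filter_upwards [this] with p hp h1 h2
    exact hp ⟨h1, h2⟩
  obtain ⟨N, hNm, hN0, hNP⟩ := CFEAux.bad_superset hfeP
  -- Step 1: three-variable identities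
  have starA : ∀ᵐ x : (ℝ × ℝ) × ℝ,
      0 < x.1.1 → 0 < x.1.2 → 0 < x.2 →
      g (x.1.1 + x.1.2) * g x.2 = g x.1.1 * g (x.1.2 + x.2) := by
    have hnull := measure_union_null (CFEAux.A1 hNm hN0) (CFEAux.A2 hNm hN0)
    rw [ae_iff]
    refine measure_mono_null (fun x hx => ?_) hnull
    simp only [mem_setOf_eq] at hx
    by_contra hnot
    simp only [mem_union, mem_setOf_eq, not_or] at hnot
    refine hx fun hu hv hw => ?_
    have e1 := hNP (x.1.1 + x.1.2, x.2) hnot.1 (show 0 < x.1.1 + x.1.2 by linarith) hw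
    have e2 := hNP (x.1.1, x.1.2 + x.2) hnot.2 hu (show 0 < x.1.2 + x.2 by linarith)
    simp only at e1 e2
    rw [e1, e2, add_assoc]
  have starB : ∀ᵐ y : (ℝ × ℝ) × ℝ,
      0 < y.1.1 → 0 < y.1.2 → 0 < y.2 →
      g (y.2 + y.1.1) * g y.1.2 = g y.2 * g (y.1.1 + y.1.2) := by
    have hnull := measure_union_null (CFEAux.A3 hNm hN0) (CFEAux.A4 hNm hN0)
    rw [ae_iff]
    refine measure_mono_null (fun y hy => ?_) hnull
    simp only [mem_setOf_eq] at hy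
    by_contra hnot
    simp only [mem_union, mem_setOf_eq, not_or] at hnot
    refine hy fun hv hw hu => ?_
    have e1 := hNP (y.2 + y.1.1, y.1.2) hnot.1 (show 0 < y.2 + y.1.1 by linarith) hw
    have e2 := hNP (y.2, y.1.1 + y.1.2) hnot.2 hu (show 0 < y.1.1 + y.1.2 by linarith)
    simp only at e1 e2
    rw [e1, e2, add_assoc]
  -- Fubini versions
  rw [Measure.volume_eq_prod] at starA starB
  have starA' := Measure.ae_ae_of_ae_prod starA
  have starB' := Measure.ae_ae_of_ae_prod starB
  -- Step 2: interval with nonzero integral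
  obtain ⟨a, b, ha, hab, hc⟩ := CFEAux.exists_interval g hloc hne
  set c : ℂ := ∫ w in a..b, g w with hcdef
  set G : ℝ → ℂ := fun v => ∫ t in (v+a)..(v+b), g t with hGdef
  have hGval : ∀ v : ℝ, G v = ∫ t in (v+a)..(v+b), g t := fun v => rfl
  -- Step 3: averaged identities
  have relI : ∀ᵐ p : ℝ × ℝ, 0 < p.1 → 0 < p.2 → g (p.1 + p.2) * c = g p.1 * G p.2 := by
    filter_upwards [starA'] with p hp hu hv
    calc g (p.1 + p.2) * c = ∫ w in a..b, g (p.1 + p.2) * g w := by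
          rw [intervalIntegral.integral_const_mul]
      _ = ∫ w in a..b, g p.1 * g (p.2 + w) := by
          refine intervalIntegral.integral_congr_ae ?_
          filter_upwards [hp] with w hw hmem
          have h0w : 0 < w := by
            rw [Set.uIoc_of_le hab.le] at hmem
            exact lt_trans ha hmem.1
          exact hw hu hv h0w
      _ = g p.1 * ∫ w in a..b, g (p.2 + w) := by rw [intervalIntegral.integral_const_mul]
      _ = g p.1 * G p.2 := by rw [intervalIntegral.integral_comp_add_left, hGval p.2]
  have relII : ∀ᵐ q : ℝ × ℝ, 0 < q.1 → 0 < q.2 → G q.1 * g q.2 = c * g (q.1 + q.2) := by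
    filter_upwards [starB'] with q hq h1 h2
    have hGq : G q.1 = ∫ u in a..b, g (u + q.1) := by
      rw [intervalIntegral.integral_comp_add_right, hGval q.1, add_comm a q.1, add_comm b q.1]
    calc G q.1 * g q.2 = ∫ u in a..b, g (u + q.1) * g q.2 := by
          rw [hGq, intervalIntegral.integral_mul_const]
      _ = ∫ u in a..b, g u * g (q.1 + q.2) := by
          refine intervalIntegral.integral_congr_ae ?_
          filter_upwards [hq] with u hu hmem
          have h0u : 0 < u := by
            rw [Set.uIoc_of_le hab.le] at hmem
            exact lt_trans ha hmem.1
          exact hu h1 h2 h0u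
      _ = (∫ u in a..b, g u) * g (q.1 + q.2) := by rw [intervalIntegral.integral_mul_const]
      _ = c * g (q.1 + q.2) := by rw [hcdef]
  have hsym : ∀ᵐ p : ℝ × ℝ, 0 < p.1 → 0 < p.2 → g p.1 * G p.2 = G p.1 * g p.2 := by
    filter_upwards [relI, relII] with p h1 h2 hu hv
    calc g p.1 * G p.2 = g (p.1 + p.2) * c := (h1 hu hv).symm
      _ = c * g (p.1 + p.2) := mul_comm _ _
      _ = G p.1 * g p.2 := (h2 hu hv).symm
    -- Step 4: continuity of G on (0, ∞)
  have hGc : ∀ v₀ : ℝ, 0 < v₀ → ContinuousAt G v₀ := by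
    intro v₀ hv₀
    set e : ℝ := v₀/2 + a with hedef
    set M : ℝ := v₀ + 1 + b with hMdef
    have he : 0 < e := by positivity
    have hg₀ : Integrable ((Icc e M).indicator g) volume :=
      (hloc.integrableOn_compact_subset (fun x hx => lt_of_lt_of_le he hx.1)
        isCompact_Icc).integrable_indicator measurableSet_Icc
    set Φ : ℝ → ℂ := fun y => ∫ t in e..y, (Icc e M).indicator g t with hΦdef
    have hΦc : Continuous Φ := hg₀.continuous_primitive e
    set r : ℝ := min (v₀/2) 1 with hrdef
    have hr : 0 < r := lt_min (by positivity) one_pos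
    have hloc_eq : ∀ v ∈ Metric.ball v₀ r, G v = Φ (v+b) - Φ (v+a) := by
      intro v hv
      rw [Metric.mem_ball, Real.dist_eq, abs_lt] at hv
      have h1 : e ≤ v + a := by
        have : r ≤ v₀/2 := min_le_left _ _
        simp only [hedef]; linarith
      have h2 : v + b ≤ M := by
        have : r ≤ 1 := min_le_right _ _
        simp only [hMdef]; linarith
      have hvab : v + a ≤ v + b := by linarith
      have heq : G v = ∫ t in (v+a)..(v+b), (Icc e M).indicator g t := by
        rw [hGval v]
        refine intervalIntegral.integral_congr fun t ht => ?_
        rw [Set.uIcc_of_le hvab] at ht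
        rw [indicator_of_mem (mem_Icc.mpr ⟨le_trans h1 ht.1, le_trans ht.2 h2⟩)]
      rw [heq]
      exact (intervalIntegral.integral_interval_sub_left
        (hg₀.intervalIntegrable) (hg₀.intervalIntegrable)).symm
    have hca : ContinuousAt (fun v => Φ (v+b) - Φ (v+a)) v₀ := by
      have h1 : Continuous fun v : ℝ => Φ (v+b) :=
        hΦc.comp (continuous_id.add continuous_const)
      have h2 : Continuous fun v : ℝ => Φ (v+a) :=
        hΦc.comp (continuous_id.add continuous_const)
      exact (h1.sub h2).continuousAt
    refine hca.congr ?_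
    filter_upwards [Metric.ball_mem_nhds v₀ hr] with v hv
    exact (hloc_eq v hv).symm
  -- Step 5: G is nonzero somewhere on (0,∞)
  have hGnonzero : ∃ v₀ : ℝ, 0 < v₀ ∧ G v₀ ≠ 0 := by
    by_contra hconG
    push_neg at hconG
    apply hne
    refine CFEAux.aezero_of_pairs ?_
    filter_upwards [relII] with q hq h1 h2
    have := hq h1 h2
    rw [hconG q.1 h1, zero_mul] at this
    exact ((mul_eq_zero.mp this.symm).resolve_left hc)
  obtain ⟨v₀, hv₀, hGv₀⟩ := hGnonzero
  -- Step 6: choose a good point v₁ near v₀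
  have hswap := CFEAux.ae_swap hsym
  rw [Measure.volume_eq_prod] at hswap
  have hsym2 := Measure.ae_ae_of_ae_prod hswap
  obtain ⟨N₂, hN₂m, hN₂0, hN₂P⟩ := CFEAux.bad_superset hsym2
  have hev : ∀ᶠ w in 𝓝 v₀, G w ≠ 0 ∧ 0 < w := by
    filter_upwards [(hGc v₀ hv₀).eventually_ne hGv₀, eventually_gt_nhds hv₀] with w h1 h2
    exact ⟨h1, h2⟩
  obtain ⟨r₂, hr₂, hball⟩ := Metric.eventually_nhds_iff_ball.mp hev
  have hnotsub : ¬ (Metric.ball v₀ r₂ ⊆ N₂) := by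
    intro hsub
    have h0 := measure_mono_null hsub hN₂0
    rw [Real.volume_ball] at h0
    simp only [ENNReal.ofReal_eq_zero] at h0
    linarith
  obtain ⟨v₁, hv₁ball, hv₁notN⟩ := not_subset.mp hnotsub
  obtain ⟨hGv₁, hv₁pos⟩ := hball v₁ hv₁ball
  have hv₁ae := hN₂P v₁ hv₁notN
  set lam : ℂ := g v₁ / G v₁ with hlamdef
  set f : ℝ → ℂ := fun x => lam * G x with hfdef
  have hgf : ∀ᵐ u : ℝ, 0 < u → g u = f u := by
    filter_upwards [hv₁ae] with u hu h0u
    have h := hu h0u hv₁pos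
    rw [hfdef, hlamdef]
    show g u = g v₁ / G v₁ * G u
    field_simp
    linear_combination h
  have hfc : ∀ x : ℝ, 0 < x → ContinuousAt f x := fun x hx =>
    continuousAt_const.mul (hGc x hx)
  -- Step 7: transfer the 3-variable identity to f, then make it pointwise
  obtain ⟨N₀, hN₀m, hN₀0, hN₀P⟩ := CFEAux.bad_superset hgf
  have hCs := measure_union_null (measure_union_null (measure_union_null
    (CFEAux.C1 hN₀m hN₀0) (CFEAux.C2 hN₀0)) (CFEAux.C3 hN₀0)) (CFEAux.C4 hN₀m hN₀0)
  have hUae : ∀ᵐ x : (ℝ × ℝ) × ℝ,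
      x.1.1 + x.1.2 ∉ N₀ ∧ x.2 ∉ N₀ ∧ x.1.1 ∉ N₀ ∧ x.1.2 + x.2 ∉ N₀ := by
    rw [ae_iff]
    refine measure_mono_null (fun x hx => ?_) hCs
    simp only [mem_setOf_eq, not_and_or, not_not] at hx
    simp only [mem_union, mem_setOf_eq]
    tauto
  rw [← Measure.volume_eq_prod] at starA
  have starF : ∀ᵐ x : (ℝ × ℝ) × ℝ,
      0 < x.1.1 → 0 < x.1.2 → 0 < x.2 →
      f (x.1.1 + x.1.2) * f x.2 = f x.1.1 * f (x.1.2 + x.2) := by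
    filter_upwards [starA, hUae] with x hg4 hU hu hv hw
    obtain ⟨h1, h2, h3, h4⟩ := hU
    have e1 : f (x.1.1 + x.1.2) = g (x.1.1 + x.1.2) :=
      (hN₀P _ h1 (by linarith)).symm
    have e2 : f x.2 = g x.2 := (hN₀P _ h2 hw).symm
    have e3 : f x.1.1 = g x.1.1 := (hN₀P _ h3 hu).symm
    have e4 : f (x.1.2 + x.2) = g (x.1.2 + x.2) := (hN₀P _ h4 (by linarith)).symm
    rw [e1, e2, e3, e4]
    exact hg4 hu hv hw
  have fI : ∀ u v w : ℝ, 0 < u → 0 < v → 0 < w → f (u + v) * f w = f u * f (v + w) := by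
    intro u v w hu hv hw
    by_contra hne'
    obtain ⟨Nf, hNfm, hNf0, hNfP⟩ := CFEAux.bad_superset starF
    set U : Set ((ℝ × ℝ) × ℝ) := ((Ioi (0:ℝ)) ×ˢ (Ioi (0:ℝ))) ×ˢ (Ioi (0:ℝ)) with hUdef
    have hUopen : IsOpen U := ((isOpen_Ioi.prod isOpen_Ioi).prod isOpen_Ioi)
    have hcontOn : ContinuousOn
        (fun x : (ℝ × ℝ) × ℝ => f (x.1.1 + x.1.2) * f x.2 - f x.1.1 * f (x.1.2 + x.2)) U := by
      intro x hx
      simp only [hUdef, mem_prod, mem_Ioi] at hx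
      obtain ⟨⟨hx1, hx2⟩, hx3⟩ := hx
      have c1 : ContinuousAt (fun x : (ℝ × ℝ) × ℝ => f (x.1.1 + x.1.2)) x :=
        (hfc _ (by linarith)).comp ((continuous_fst.fst.add continuous_fst.snd).continuousAt)
      have c2 : ContinuousAt (fun x : (ℝ × ℝ) × ℝ => f x.2) x :=
        (hfc _ hx3).comp continuous_snd.continuousAt
      have c3 : ContinuousAt (fun x : (ℝ × ℝ) × ℝ => f x.1.1) x :=
        ContinuousAt.comp (g := f) (f := fun y : (ℝ × ℝ) × ℝ => y.1.1) (hfc _ hx1) ((continuous_fst.comp continuous_fst).continuousAt)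
      have c4 : ContinuousAt (fun x : (ℝ × ℝ) × ℝ => f (x.1.2 + x.2)) x :=
        (hfc _ (by linarith)).comp ((continuous_fst.snd.add continuous_snd).continuousAt)
      exact ((c1.mul c2).sub (c3.mul c4)).continuousWithinAt
    set D : Set ((ℝ × ℝ) × ℝ) := U ∩ (fun x : (ℝ × ℝ) × ℝ =>
      f (x.1.1 + x.1.2) * f x.2 - f x.1.1 * f (x.1.2 + x.2)) ⁻¹' ({0}ᶜ) with hDdef
    have hDopen : IsOpen D :=
      hcontOn.isOpen_inter_preimage hUopen (isOpen_compl_singleton)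
    have hDne : (((u, v), w) : (ℝ × ℝ) × ℝ) ∈ D := by
      refine ⟨⟨⟨hu, hv⟩, hw⟩, ?_⟩
      simp only [mem_preimage, mem_compl_iff, mem_singleton_iff]
      intro h0
      exact hne' (sub_eq_zero.mp h0)
    have hDnull : volume D = 0 := by
      refine measure_mono_null (fun x hx => ?_) hNf0
      rcases hx with ⟨hxU, hxP⟩
      simp only [hUdef, mem_prod, mem_Ioi] at hxU
      by_contra hxN
      have := hNfP x hxN hxU.1.1 hxU.1.2 hxU.2
      simp only [mem_preimage, mem_compl_iff, mem_singleton_iff] at hxP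
      exact hxP (sub_eq_zero.mpr this)
    have hpos : 0 < volume D := hDopen.measure_pos volume ⟨_, hDne⟩
    rw [hDnull] at hpos
    exact lt_irrefl 0 hpos
    -- Step 8: f has a nonzero value on (0,∞)
  have hfexists : ∃ u₀ : ℝ, 0 < u₀ ∧ f u₀ ≠ 0 := by
    by_contra hcon
    push_neg at hcon
    apply hne
    rw [Filter.EventuallyEq, ae_restrict_iff' measurableSet_Ioi]
    filter_upwards [hgf] with u hu hmem
    have h0u : 0 < u := hmem
    simp only [Pi.zero_apply]
    rw [hu h0u]
    exact hcon u h0u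
  obtain ⟨u₀, hu₀, hfu₀⟩ := hfexists
  -- Step 9: f never vanishes on (0,∞)
  have zero_up : ∀ y z : ℝ, 0 < y → f y = 0 → y < z → f z = 0 := by
    intro y z hy hfy hyz
    have h := fI y (z - y) u₀ hy (by linarith) hu₀
    rw [show y + (z - y) = z by ring, hfy, zero_mul] at h
    rcases mul_eq_zero.mp h with h' | h'
    · exact h'
    · exact absurd h' hfu₀
  have hnz : ∀ x : ℝ, 0 < x → f x ≠ 0 := by
    intro x hx hfx
    have claim : ∀ n : ℕ, ∀ y : ℝ, x / 2^n < y → f y = 0 := by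
      intro n
      induction n with
      | zero =>
        intro y hy
        simp only [pow_zero, div_one] at hy
        exact zero_up x y hx hfx hy
      | succ n ih =>
        intro y hy
        have hz0 : (0:ℝ) < x / 2^n := by positivity
        have hz2 : x / 2^(n+1) = (x / 2^n) / 2 := by
          rw [pow_succ]; ring
        have hzpos : (0:ℝ) < x / 2^(n+1) := by positivity
        have hy0 : 0 < y := lt_trans hzpos hy
        set t : ℝ := min ((x / 2^(n+1) + y)/2) (x / 2^n) with htdef
        have htpos : 0 < t := lt_min (by linarith) hz0
        have htlt : x / 2^(n+1) < t := by
          apply lt_min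
          · linarith
          · rw [hz2]; linarith
        have hty : t < y := lt_of_le_of_lt (min_le_left _ _) (by linarith)
        have h2t : x / 2^n < 2 * t := by
          have h' : (x / 2^n) / 2 < t := by rw [← hz2]; exact htlt
          linarith
        have hf2t : f (2*t) = 0 := ih (2*t) h2t
        have h := fI t t (y - t) htpos htpos (by linarith)
        rw [show t + t = 2*t by ring, hf2t, zero_mul,
          show t + (y - t) = y by ring] at h
        rcases mul_eq_zero.mp h.symm with h' | h'
        · exact zero_up t y htpos h' hty
        · exact h'
    obtain ⟨n, hn⟩ : ∃ n : ℕ, x / u₀ < 2 ^ n := pow_unbounded_of_one_lt _ one_lt_two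
    have h1 : x < 2^n * u₀ := (div_lt_iff₀ hu₀).mp hn
    have h2 : x / 2^n < u₀ := by
      rw [div_lt_iff₀ (by positivity : (0:ℝ) < 2^n), mul_comm]
      exact h1
    exact hfu₀ (claim n u₀ h2)
  -- Step 10: the two-variable "depends only on the sum" identity
  have pairEq : ∀ p q r s : ℝ, 0 < p → 0 < q → 0 < r → 0 < s → p + q = r + s →
      f p * f q = f r * f s := by
    intro p q r s hp hq hr hs hsum
    rcases lt_trichotomy p r with h | h | h
    · have h' := fI p (r - p) s hp (by linarith) hs
      rw [show p + (r - p) = r by ring] at h'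
      rw [show r - p + s = q by linarith] at h'
      exact h'.symm
    · have hq' : q = s := by linarith
      rw [h, hq']
    · have h' := fI r (p - r) q hr (by linarith) hq
      rw [show r + (p - r) = p by ring] at h'
      rw [show p - r + q = s by linarith] at h'
      exact h'
  -- Step 11: extend to a continuous character F on ℝ
  set F : ℝ → ℂ := fun x => f (x + (|x| + 1)) / f (|x| + 1) with hFdef
  have habs : ∀ x : ℝ, 0 < x + (|x| + 1) := fun x => by
    have := neg_abs_le x; linarith
  have habs1 : ∀ x : ℝ, 0 < |x| + 1 := fun x => by positivity
  have hFeq : ∀ x t : ℝ, 0 < t → 0 < x + t → F x = f (x + t) / f t := by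
    intro x t ht hxt
    have hP := pairEq (x + (|x| + 1)) t (x + t) (|x| + 1) (habs x) ht hxt (habs1 x) (by ring)
    rw [hFdef]
    show f (x + (|x| + 1)) / f (|x| + 1) = f (x + t) / f t
    rw [div_eq_div_iff (hnz _ (habs1 x)) (hnz _ ht)]
    exact hP
  have hFhom : ∀ x y : ℝ, F (x + y) = F x * F y := by
    intro x y
    have hax := neg_abs_le x
    have hay := neg_abs_le y
    have hax' := abs_nonneg x
    have hay' := abs_nonneg y
    set t : ℝ := |x| + |y| + 1 with htdef
    have ht : 0 < t := by positivity
    have hx : 0 < x + t := by simp only [htdef]; linarith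
    have hy : 0 < y + t := by simp only [htdef]; linarith
    have hxy : 0 < x + y + t := by simp only [htdef]; linarith
    rw [hFeq (x+y) t ht hxy, hFeq x t ht hx, hFeq y t ht hy]
    have hP := pairEq (x + y + t) t (x + t) (y + t) hxy ht hx hy (by ring)
    rw [div_mul_div_comm, div_eq_div_iff (hnz _ ht) (mul_ne_zero (hnz _ ht) (hnz _ ht))]
    linear_combination (f t) * hP
  have hF0 : F 0 = 1 := by
    rw [hFdef]
    show f (0 + (|(0:ℝ)| + 1)) / f (|(0:ℝ)| + 1) = 1
    rw [abs_zero]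
    norm_num
    exact hnz 1 one_pos
  have hFnz : ∀ x : ℝ, F x ≠ 0 := fun x =>
    div_ne_zero (hnz _ (habs x)) (hnz _ (habs1 x))
  have hFcont : Continuous F := by
    rw [continuous_iff_continuousAt]
    intro x₀
    have ht : (0:ℝ) < |x₀| + 2 := by positivity
    have hca : ContinuousAt (fun x : ℝ => f (x + (|x₀| + 2)) / f (|x₀| + 2)) x₀ := by
      have h1 : 0 < x₀ + (|x₀| + 2) := by have := neg_abs_le x₀; linarith
      have h2 : ContinuousAt (fun x : ℝ => f (x + (|x₀| + 2))) x₀ :=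
        ContinuousAt.comp (g := f) (f := fun x : ℝ => x + (|x₀| + 2)) (hfc _ h1)
          ((continuous_id.add continuous_const).continuousAt)
      exact h2.div_const _
    refine hca.congr ?_
    filter_upwards [Metric.ball_mem_nhds x₀ one_pos] with x hx
    rw [Metric.mem_ball, Real.dist_eq, abs_lt] at hx
    have h1 : 0 < x + (|x₀| + 2) := by
      have := neg_abs_le x₀; linarith
    exact (hFeq x (|x₀| + 2) ht h1).symm
  -- Step 12: pick δ with nonvanishing integral
  obtain ⟨δ, hδpos, hδ⟩ : ∃ δ : ℝ, 0 < δ ∧ ∀ s : ℝ, s ∈ Set.uIoc 0 δ → ‖F s - 1‖ ≤ 1/2 := by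
    obtain ⟨ε, hε, hball⟩ := Metric.continuousAt_iff.mp
      (hFcont.continuousAt (x := (0:ℝ))) (1/2) (by norm_num)
    refine ⟨ε/2, by positivity, fun s hs => ?_⟩
    rw [Set.uIoc_of_le (by positivity : (0:ℝ) ≤ ε/2)] at hs
    have hd : dist s 0 < ε := by
      rw [Real.dist_eq, sub_zero, abs_of_pos hs.1]
      linarith [hs.2]
    have hlt := hball hd
    rw [hF0, dist_eq_norm] at hlt
    exact hlt.le
  set c2 : ℂ := ∫ s in (0:ℝ)..δ, F s with hc2def
  have hc2sub : c2 - (δ:ℂ) = ∫ s in (0:ℝ)..δ, (F s - 1) := by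
    rw [intervalIntegral.integral_sub (hFcont.intervalIntegrable _ _) intervalIntegrable_const,
      hc2def]
    congr 1
    rw [intervalIntegral.integral_const]
    simp
  have hc2ne : c2 ≠ 0 := by
    intro h0
    have hb : ‖c2 - (δ:ℂ)‖ ≤ (1/2) * |δ - 0| := by
      rw [hc2sub]
      exact intervalIntegral.norm_integral_le_of_norm_le_const fun s hs => hδ s hs
    rw [h0, zero_sub, norm_neg, Complex.norm_real, Real.norm_eq_abs, abs_of_pos hδpos,
      sub_zero, abs_of_pos hδpos] at hb
    linarith
  -- Step 13: F satisfies an ODE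
  have hkey : ∀ x : ℝ, F x * c2 = ∫ s in x..(x+δ), F s := by
    intro x
    have h1 : (∫ s in (0:ℝ)..δ, F x * F s) = ∫ s in (0:ℝ)..δ, F (x + s) :=
      intervalIntegral.integral_congr fun s _ => (hFhom x s).symm
    rw [hc2def, ← intervalIntegral.integral_const_mul, h1,
      intervalIntegral.integral_comp_add_left]
    norm_num
  have hprim : ∀ y : ℝ, HasDerivAt (fun y : ℝ => ∫ s in (0:ℝ)..y, F s) (F y) y := by
    intro y
    exact intervalIntegral.integral_hasDerivAt_right (hFcont.intervalIntegrable _ _)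
      (hFcont.stronglyMeasurableAtFilter _ _) hFcont.continuousAt
  set B : ℂ := (F δ - 1)/c2 with hBdef
  have hFder : ∀ x : ℝ, HasDerivAt F (B * F x) x := by
    intro x
    have hrep' : ∀ y : ℝ, F y
        = c2⁻¹ * ((∫ s in (0:ℝ)..(y+δ), F s) - ∫ s in (0:ℝ)..y, F s) := by
      intro y
      have hsub := intervalIntegral.integral_interval_sub_left
        (hFcont.intervalIntegrable (μ := volume) 0 (y+δ))
        (hFcont.intervalIntegrable (μ := volume) 0 y)
      rw [hsub, ← hkey y]
      field_simp
    have h1 : HasDerivAt (fun y : ℝ => ∫ s in (0:ℝ)..(y+δ), F s) (F (x+δ)) x := by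
      exact HasDerivAt.comp_add_const x δ (hprim (x + δ))
    have hd : HasDerivAt
        (fun y : ℝ => c2⁻¹ * ((∫ s in (0:ℝ)..(y+δ), F s) - ∫ s in (0:ℝ)..y, F s))
        (c2⁻¹ * (F (x+δ) - F x)) x := ((h1.sub (hprim x)).const_mul _)
    have hF' : HasDerivAt F (c2⁻¹ * (F (x+δ) - F x)) x :=
      hd.congr_of_eventuallyEq (Filter.Eventually.of_forall fun y => hrep' y)
    have heq : c2⁻¹ * (F (x+δ) - F x) = B * F x := by
      rw [hFhom x δ, hBdef]
      field_simp
    rw [← heq]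
    exact hF'
  -- Step 14: solve the ODE
  have hexp : ∀ x : ℝ, F x = Complex.exp (B * x) := by
    have hder0 : ∀ x : ℝ, HasDerivAt (fun y : ℝ => F y * Complex.exp (-(B * y))) 0 x := by
      intro x
      have h2 : HasDerivAt (fun y : ℝ => Complex.exp (-(B * y)))
          (-B * Complex.exp (-(B * (x:ℂ)))) x := by
        have h3 : HasDerivAt (fun z : ℂ => -(B * z)) (-B) (x:ℂ) := by
          simpa using ((hasDerivAt_id (x:ℂ)).const_mul B).fun_neg
        have he : HasDerivAt (fun z : ℂ => Complex.exp (-(B * z)))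
            (-B * Complex.exp (-(B * (x:ℂ)))) (x : ℂ) := by
          simpa [mul_comm, Function.comp_def] using (Complex.hasDerivAt_exp (-(B * (x:ℂ)))).comp (x:ℂ) h3
        exact he.comp_ofReal
      have h := (hFder x).mul h2
      have hval : B * F x * Complex.exp (-(B * (x:ℂ)))
          + F x * (-B * Complex.exp (-(B * (x:ℂ)))) = 0 := by ring
      rw [hval] at h
      exact h
    have hconst := is_const_of_deriv_eq_zero (𝕜 := ℝ)
      (fun x => (hder0 x).differentiableAt) (fun x => (hder0 x).deriv)
    intro x
    have h1 : F x * Complex.exp (-(B * x)) = F 0 * Complex.exp (-(B * 0)) := hconst x 0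
    rw [hF0] at h1
    simp only [Complex.ofReal_zero, mul_zero, neg_zero, Complex.exp_zero, one_mul] at h1
    rw [Complex.exp_neg] at h1
    field_simp [Complex.exp_ne_zero] at h1
    exact h1
  -- Step 15: conclude
  refine ⟨f 1 * Complex.exp (-B), -B, ?_⟩
  have hfinal : ∀ u : ℝ, 0 < u → f u = (f 1 * Complex.exp (-B)) * Complex.exp (-(-B) * u) := by
    intro u hu
    have h1 : F (u - 1) = f u / f 1 := by
      rw [hFeq (u - 1) 1 one_pos (by linarith), show u - 1 + 1 = u by ring]
    rw [hexp (u - 1)] at h1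
    push_cast at h1
    have h2 : f u = f 1 * Complex.exp (B * ((u:ℂ) - 1)) := by
      have h3 := (eq_div_iff (hnz 1 one_pos)).mp h1
      linear_combination -h3
    rw [h2, neg_neg]
    rw [show (B : ℂ) * ((u:ℂ) - 1) = -B + B * u by ring, Complex.exp_add]
    ring
  filter_upwards [ae_restrict_mem measurableSet_Ioi, ae_restrict_of_ae hgf] with u hu hgu
  rw [hgu (mem_Ioi.mp hu)]
  exact hfinal u (mem_Ioi.mp hu)
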